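/- Let N be a finite index set of RUs with parameters kₙ > 0 and generation levels Eₙ for n ∈ N, let pg > 0 be the grid selling price and Ereq the SFC's energy requirement, and suppose Σₙ kₙ > 0. Then the reduced SFC cost function J̃(p) = p · Σₙ (Eₙ − (kₙ/p − 1)) + (Ereq − Σₙ (Eₙ − (kₙ/p − 1))) · pg is strictly convex on (0, ∞). -/

import Mathlib

/-- The reduced SFC cost function
`J̃(p) = p·Σₙ(Eₙ − (kₙ/p − 1)) + (Ereq − Σₙ(Eₙ − (kₙ/p − 1)))·pg`
is strictly convex on `(0, ∞)` when every `kₙ > 0`, `pg > 0` and `Σₙ kₙ > 0`. -/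
theorem sfc_cost_strictConvexOn {ι : Type*} (N : Finset ι) (k E : ι → ℝ)
    (hk : ∀ n ∈ N, 0 < k n) (pg : ℝ) (hpg : 0 < pg) (Ereq : ℝ)
    (hksum : 0 < ∑ n ∈ N, k n) :
    StrictConvexOn ℝ (Set.Ioi 0)
      (fun p : ℝ => p * ∑ n ∈ N, (E n - (k n / p - 1)) +
        (Ereq - ∑ n ∈ N, (E n - (k n / p - 1))) * pg) := by
  set K : ℝ := ∑ n ∈ N, k n with hK
  set S : ℝ := ∑ n ∈ N, (E n + 1) with hS
  have h1 : StrictConvexOn ℝ (Set.Ioi 0) fun x : ℝ => (K * pg) • x ^ (-1 : ℤ) := by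
    have hz : StrictConvexOn ℝ (Set.Ioi 0) fun x : ℝ => x ^ (-1 : ℤ) :=
      strictConvexOn_zpow (by decide) (by decide)
    have hc : (0:ℝ) < K * pg := by positivity
    refine ⟨hz.1, fun x hx y hy hxy a b ha hb hab => ?_⟩
    have h := hz.2 hx hy hxy ha hb hab
    simp only [smul_eq_mul] at h ⊢
    nlinarith [h]
  have h2 : ConvexOn ℝ (Set.Ioi 0) fun x : ℝ => S * x + ((Ereq - S) * pg - K) := by
    refine ConvexOn.add_const ?_ _
    exact (LinearMap.lsmul ℝ ℝ S).convexOn (convex_Ioi 0)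
  refine (h1.add_convexOn h2).congr fun x hx => ?_
  have hx0 : (x : ℝ) ≠ 0 := ne_of_gt hx
  have hsum : ∑ n ∈ N, (E n - (k n / x - 1)) = S - K / x := by
    rw [hS, hK, Finset.sum_div, ← Finset.sum_sub_distrib]
    exact Finset.sum_congr rfl fun n _ => by ring
  simp only [hsum, smul_eq_mul, zpow_neg_one, Pi.add_apply]
  field_simp
  ring
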